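/- Let G be a group, {z_i}_{i∈I} a finite family of elements of G, and {H_i} subgroups with H_i ≤ C_G(z_i) for each i. If each H_i is finitely separable in G, then the quandle ⊔_{i∈I} (G, H_i, z_i) with operation H_i x * H_j y = H_i z_i⁻¹ x y⁻¹ z_j y is residually finite. -/
import Mathlib

open Quandles

/-- A quandle is residually finite if any two distinct elements can be
separated by a quandle homomorphism to a finite quandle. -/
def QuandleResiduallyFinite (Q : Type*) [Quandle Q] : Prop :=
  ∀ x y : Q, x ≠ y → ∃ (F : Type) (_ : Quandle F) (_ : Finite F) (φ : Q →◃ F),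
    φ x ≠ φ y

/-- A subgroup `H` of `G` is finitely separable if every `g ∈ G \ H` can be
separated from `H` by a homomorphism to a finite group. -/
def FinitelySeparable {G : Type*} [Group G] (H : Subgroup G) : Prop :=
  ∀ g : G, g ∉ H → ∃ (F : Type) (_ : Group F) (_ : Finite F) (φ : G →* F),
    φ g ∉ H.map φ

namespace Stmt12Aux

variable {G : Type*} [Group G] {I : Type*}

lemma conj_eq {w h : G} (c : w * h = h * w) : w⁻¹ * h * w = h := by
  rw [mul_assoc, ← c, ← mul_assoc, inv_mul_cancel, one_mul]

lemma key0 (zi zj x y h k : G) (c1 : zi * h = h * zi) (c2 : zj * k = k * zj) :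
    (zi⁻¹ * (h * x) * (k * y)⁻¹ * zj * (k * y)) * (zi⁻¹ * x * y⁻¹ * zj * y)⁻¹ = h := by
  have e1 : zi⁻¹ * h * zi = h := conj_eq c1
  have e2 : k⁻¹ * zj * k = zj := conj_eq c2.symm
  calc (zi⁻¹ * (h * x) * (k * y)⁻¹ * zj * (k * y)) * (zi⁻¹ * x * y⁻¹ * zj * y)⁻¹
      = zi⁻¹ * h * (x * (y⁻¹ * (k⁻¹ * zj * k) * y) * (y⁻¹ * zj * y)⁻¹ * x⁻¹) * zi := by
        group
    _ = zi⁻¹ * h * (x * (y⁻¹ * zj * y) * (y⁻¹ * zj * y)⁻¹ * x⁻¹) * zi := by rw [e2]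
    _ = zi⁻¹ * h * zi := by group
    _ = h := e1

lemma key (zi zj : G) {x y x' y' : G} (c1 : zi * (x' * x⁻¹) = (x' * x⁻¹) * zi)
    (c2 : zj * (y' * y⁻¹) = (y' * y⁻¹) * zj) :
    (zi⁻¹ * x' * y'⁻¹ * zj * y') * (zi⁻¹ * x * y⁻¹ * zj * y)⁻¹ = x' * x⁻¹ := by
  have := key0 zi zj x y (x' * x⁻¹) (y' * y⁻¹) c1 c2
  rwa [inv_mul_cancel_right, inv_mul_cancel_right] at this

/-- The disjoint union of right coset spaces. -/
abbrev CQ (H : I → Subgroup G) := Σ i : I, Quotient (QuotientGroup.rightRel (H i))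

variable (z : I → G) (H : I → Subgroup G)

lemma comm_of_mem (hH : ∀ i, H i ≤ Subgroup.centralizer {z i}) {i : I} {h : G}
    (hh : h ∈ H i) : z i * h = h * z i :=
  (Subgroup.mem_centralizer_singleton_iff.mp (hH i hh)).symm

/-- The action on the coset quandle. -/
def cact (hH : ∀ i, H i ≤ Subgroup.centralizer {z i}) (b a : CQ H) : CQ H :=
  ⟨a.1, Quotient.liftOn₂ a.2 b.2
    (fun x y => Quotient.mk (QuotientGroup.rightRel (H a.1))
      ((z a.1)⁻¹ * x * y⁻¹ * z b.1 * y))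
    (by
      intro x y x' y' hx hy
      have hx' : x' * x⁻¹ ∈ H a.1 := QuotientGroup.rightRel_apply.mp hx
      have hy' : y' * y⁻¹ ∈ H b.1 := QuotientGroup.rightRel_apply.mp hy
      exact Quotient.sound (QuotientGroup.rightRel_apply.mpr (by
        rw [key (z a.1) (z b.1) (comm_of_mem z H hH hx') (comm_of_mem z H hH hy')]
        exact hx')))⟩

lemma cact_mk (hH : ∀ i, H i ≤ Subgroup.centralizer {z i}) (i j : I) (x y : G) :
    cact z H hH ⟨j, Quotient.mk _ y⟩ ⟨i, Quotient.mk _ x⟩ =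
      ⟨i, Quotient.mk (QuotientGroup.rightRel (H i)) ((z i)⁻¹ * x * y⁻¹ * z j * y)⟩ :=
  rfl

/-- The inverse action. -/
def cinv (hH : ∀ i, H i ≤ Subgroup.centralizer {z i}) (b a : CQ H) : CQ H :=
  ⟨a.1, Quotient.liftOn₂ a.2 b.2
    (fun x y => Quotient.mk (QuotientGroup.rightRel (H a.1))
      (((z a.1)⁻¹)⁻¹ * x * y⁻¹ * (z b.1)⁻¹ * y))
    (by
      intro x y x' y' hx hy
      have hx' : x' * x⁻¹ ∈ H a.1 := QuotientGroup.rightRel_apply.mp hx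
      have hy' : y' * y⁻¹ ∈ H b.1 := QuotientGroup.rightRel_apply.mp hy
      have c1 : (z a.1)⁻¹ * (x' * x⁻¹) = (x' * x⁻¹) * (z a.1)⁻¹ := by
        have := comm_of_mem z H hH hx'
        calc (z a.1)⁻¹ * (x' * x⁻¹) = (z a.1)⁻¹ * ((x' * x⁻¹) * z a.1) * (z a.1)⁻¹ := by group
          _ = (z a.1)⁻¹ * (z a.1 * (x' * x⁻¹)) * (z a.1)⁻¹ := by rw [← this]
          _ = (x' * x⁻¹) * (z a.1)⁻¹ := by group
      have c2 : (z b.1)⁻¹ * (y' * y⁻¹) = (y' * y⁻¹) * (z b.1)⁻¹ := by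
        have := comm_of_mem z H hH hy'
        calc (z b.1)⁻¹ * (y' * y⁻¹) = (z b.1)⁻¹ * ((y' * y⁻¹) * z b.1) * (z b.1)⁻¹ := by group
          _ = (z b.1)⁻¹ * (z b.1 * (y' * y⁻¹)) * (z b.1)⁻¹ := by rw [← this]
          _ = (y' * y⁻¹) * (z b.1)⁻¹ := by group
      exact Quotient.sound (QuotientGroup.rightRel_apply.mpr (by
        rw [key ((z a.1)⁻¹) ((z b.1)⁻¹) c1 c2]
        exact hx')))⟩

lemma cinv_mk (hH : ∀ i, H i ≤ Subgroup.centralizer {z i}) (i j : I) (x y : G) :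
    cinv z H hH ⟨j, Quotient.mk _ y⟩ ⟨i, Quotient.mk _ x⟩ =
      ⟨i, Quotient.mk (QuotientGroup.rightRel (H i))
        (((z i)⁻¹)⁻¹ * x * y⁻¹ * (z j)⁻¹ * y)⟩ :=
  rfl

/-- The coset quandle structure. -/
def cosetQuandle (hH : ∀ i, H i ≤ Subgroup.centralizer {z i}) : Quandle (CQ H) where
  act := cact z H hH
  self_distrib := by
    rintro ⟨k, c⟩ ⟨j, b⟩ ⟨i, a⟩
    induction a using Quotient.inductionOn with | h a =>
    induction b using Quotient.inductionOn with | h b =>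
    induction c using Quotient.inductionOn with | h c =>
    simp only [cact_mk]
    exact congrArg (fun w => (⟨i, Quotient.mk (QuotientGroup.rightRel (H i)) w⟩ : CQ H))
      (by group)
  invAct := cinv z H hH
  left_inv := by
    rintro ⟨j, b⟩ ⟨i, a⟩
    induction a using Quotient.inductionOn with | h a =>
    induction b using Quotient.inductionOn with | h b =>
    simp only [cact_mk, cinv_mk]
    exact congrArg (fun w => (⟨i, Quotient.mk (QuotientGroup.rightRel (H i)) w⟩ : CQ H))
      (by group)
  right_inv := by
    rintro ⟨j, b⟩ ⟨i, a⟩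
    induction a using Quotient.inductionOn with | h a =>
    induction b using Quotient.inductionOn with | h b =>
    simp only [cact_mk, cinv_mk]
    exact congrArg (fun w => (⟨i, Quotient.mk (QuotientGroup.rightRel (H i)) w⟩ : CQ H))
      (by group)
  fix := by
    rintro ⟨i, a⟩
    induction a using Quotient.inductionOn with | h a =>
    simp only [cact_mk]
    exact congrArg (fun w => (⟨i, Quotient.mk (QuotientGroup.rightRel (H i)) w⟩ : CQ H))
      (by group)

/-- Transfer a quandle structure along an equivalence. -/
def transferQuandle {Q F : Type*} [Quandle Q] (e : Q ≃ F) : Quandle F where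
  act x y := e (Shelf.act (e.symm x) (e.symm y))
  self_distrib := by
    intro x y z
    simp only [Equiv.symm_apply_apply]
    exact congrArg e Shelf.self_distrib
  invAct x y := e (Rack.invAct (e.symm x) (e.symm y))
  left_inv := by
    intro x y
    simp only [Equiv.symm_apply_apply]
    rw [Rack.left_inv]
    exact e.apply_symm_apply y
  right_inv := by
    intro x y
    simp only [Equiv.symm_apply_apply]
    rw [Rack.right_inv]
    exact e.apply_symm_apply y
  fix := by
    intro x
    show e (Shelf.act (e.symm x) (e.symm x)) = x
    rw [Quandle.fix, e.apply_symm_apply]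

/-- The map of coset quandles induced by a group homomorphism. -/
def cmap {F : Type*} [Group F] (ψ : G →* F) (a : CQ H) :
    CQ (fun i => (H i).map ψ) :=
  ⟨a.1, Quotient.map ψ
    (fun x x' hx => QuotientGroup.rightRel_apply.mpr (by
      rw [← map_inv, ← map_mul]
      exact Subgroup.mem_map_of_mem ψ (QuotientGroup.rightRel_apply.mp hx))) a.2⟩

lemma cmap_mk {F : Type*} [Group F] (ψ : G →* F) (i : I) (x : G) :
    cmap H ψ (⟨i, Quotient.mk _ x⟩ : CQ H) =
      ⟨i, Quotient.mk (QuotientGroup.rightRel ((H i).map ψ)) (ψ x)⟩ :=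
  rfl

end Stmt12Aux

open Stmt12Aux in
/-- Let `G` be a group, `{z i}` a finite family of elements and `{H i}`
subgroups with `H i ≤ C_G(z i)`.  If each `H i` is finitely separable in `G`,
then the quandle `⊔ᵢ (G, H i, z i)` — the disjoint union of the right coset
spaces `(H i)\G` with `H_i x * H_j y = H_i (z i)⁻¹ x y⁻¹ (z j) y` (the paper's
`a * b` being `b ◃ a` in Mathlib's left-action convention) — is residually
finite. -/
theorem stmt12 (G : Type*) [Group G] (I : Type*) [Finite I] (z : I → G)
    (H : I → Subgroup G) (hH : ∀ i, H i ≤ Subgroup.centralizer {z i})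
    (hsep : ∀ i, FinitelySeparable (H i))
    (q : Quandle (Σ i : I, Quotient (QuotientGroup.rightRel (H i))))
    (hq : ∀ (i j : I) (x y : G),
      q.act (⟨j, Quotient.mk (QuotientGroup.rightRel (H j)) y⟩ :
          Σ i : I, Quotient (QuotientGroup.rightRel (H i)))
        ⟨i, Quotient.mk (QuotientGroup.rightRel (H i)) x⟩ =
        ⟨i, Quotient.mk (QuotientGroup.rightRel (H i))
          ((z i)⁻¹ * x * y⁻¹ * z j * y)⟩) :
    @QuandleResiduallyFinite _ q := by
  letI : Quandle (Σ i : I, Quotient (QuotientGroup.rightRel (H i))) := q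
  -- A general separation construction from a group homomorphism.
  have main : ∀ (Fg : Type) (_ : Group Fg) (_ : Finite Fg) (ψ : G →* Fg),
      ∃ (F : Type) (qF : Quandle F) (_ : Finite F)
        (φ : (Σ i : I, Quotient (QuotientGroup.rightRel (H i))) →◃ F),
        ∀ a b : CQ H, cmap H ψ a ≠ cmap H ψ b → φ a ≠ φ b := by
    intro Fg _ _ ψ
    have hH' : ∀ i, (H i).map ψ ≤ Subgroup.centralizer {ψ (z i)} := by
      intro i g hg
      obtain ⟨h, hh, rfl⟩ := hg
      rw [Subgroup.mem_centralizer_singleton_iff, ← map_mul, ← map_mul,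
        ← comm_of_mem z H hH hh]
    letI qT : Quandle (CQ fun i => (H i).map ψ) := cosetQuandle (fun i => ψ (z i)) _ hH'
    have hfin : Finite (CQ fun i => (H i).map ψ) := inferInstance
    obtain ⟨n, ⟨e⟩⟩ := Finite.exists_equiv_fin (CQ fun i => (H i).map ψ)
    letI qF : Quandle (Fin n) := transferQuandle e
    refine ⟨Fin n, qF, inferInstance, ⟨fun a => e (cmap H ψ a), ?_⟩, ?_⟩
    · rintro ⟨i, a⟩ ⟨j, b⟩
      induction a using Quotient.inductionOn with | h a =>
      induction b using Quotient.inductionOn with | h b =>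
      show e (cmap H ψ (Shelf.act _ _)) = Shelf.act (e (cmap H ψ _)) (e (cmap H ψ _))
      have : Shelf.act (⟨i, Quotient.mk _ a⟩ : CQ H) ⟨j, Quotient.mk _ b⟩ =
          ⟨j, Quotient.mk (QuotientGroup.rightRel (H j))
            ((z j)⁻¹ * b * a⁻¹ * z i * a)⟩ := hq j i b a
      rw [this, cmap_mk, cmap_mk, cmap_mk]
      show e _ = e (Shelf.act (e.symm (e _)) (e.symm (e _)))
      rw [e.symm_apply_apply, e.symm_apply_apply]
      refine congrArg e ?_
      show _ = cact (fun i => ψ (z i)) (fun i => (H i).map ψ) hH' _ _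
      rw [cact_mk]
      exact congrArg (fun w =>
        (⟨j, Quotient.mk (QuotientGroup.rightRel ((H j).map ψ)) w⟩ :
          CQ fun i => (H i).map ψ)) (by simp [map_mul, map_inv])
    · intro a b hab h
      exact hab (e.injective h)
  intro a b hab
  obtain ⟨i, xq⟩ := a
  obtain ⟨j, yq⟩ := b
  induction xq using Quotient.inductionOn with | h x =>
  induction yq using Quotient.inductionOn with | h y =>
  by_cases hij : i = j
  · subst hij
    have hxy : y * x⁻¹ ∉ H i := by
      intro hm
      exact hab (congrArg (Sigma.mk i)
        (Quotient.sound (QuotientGroup.rightRel_apply.mpr hm)))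
    obtain ⟨Fg, _, _, ψ, hψ⟩ := hsep i (y * x⁻¹) hxy
    obtain ⟨F, qF, hF, φ, hφ⟩ := main Fg ‹_› ‹_› ψ
    refine ⟨F, qF, hF, φ, hφ _ _ ?_⟩
    rw [cmap_mk, cmap_mk]
    intro hc
    have h2 : (Quotient.mk (QuotientGroup.rightRel ((H i).map ψ)) (ψ x) :
        Quotient (QuotientGroup.rightRel ((H i).map ψ))) = Quotient.mk _ (ψ y) := by
      have := (Sigma.mk.inj_iff.mp hc).2
      exact eq_of_heq this
    have h3 : ψ y * (ψ x)⁻¹ ∈ (H i).map ψ := QuotientGroup.rightRel_apply.mp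
      (Quotient.exact h2)
    rw [← map_inv, ← map_mul] at h3
    exact hψ h3
  · obtain ⟨F, qF, hF, φ, hφ⟩ := main PUnit inferInstance inferInstance 1
    refine ⟨F, qF, hF, φ, hφ _ _ ?_⟩
    rw [cmap_mk, cmap_mk]
    intro hc
    exact hij (Sigma.mk.inj_iff.mp hc).1
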